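/- arXiv:2312.12303 — 3 statements merged into one kernel-verified Lean document; each statement's English description precedes it below -/
import Mathlib

section
/- Let o_1, o_2, … be i.i.d. real random variables with CDF F. For each i let K_{o_i} be a probability measure on ℝ with continuous CDF F_{K_{o_i}}, let X_i be distributed according to K_{o_i}, let Y_i = |X_i − o_i|, and let C_i(ε) = P(Y_i ≥ ε). If for every ε > 0 we have (1/n)·∑_{i=1}^n C_i(ε) → 0 as n → ∞, then almost surely the averaged CDFs H_n(x) = (1/n)·∑_{i=1}^n F_{K_{o_i}}(x) converge to F(x) at every continuity point x of F. -/
open MeasureTheory Filter Topology ProbabilityTheory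

private lemma kernel_lower (κ : Measure ℝ) [IsProbabilityMeasure κ] {r x q ε : ℝ}
    (hqx : q + ε ≤ x) :
    (if r ≤ q then (1:ℝ) else 0) - (κ {y : ℝ | ε ≤ |y - r|}).toReal
      ≤ (κ (Set.Iic x)).toReal := by
  by_cases h : r ≤ q
  · simp only [h, if_true]
    have hsub : Set.Ioi x ⊆ {y : ℝ | ε ≤ |y - r|} := by
      intro y hy
      simp only [Set.mem_Ioi] at hy
      have : ε ≤ y - r := by linarith
      exact this.trans (le_abs_self _)
    have h1 : (κ (Set.Ioi x)).toReal ≤ (κ {y : ℝ | ε ≤ |y - r|}).toReal :=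
      ENNReal.toReal_mono (measure_ne_top κ _) (measure_mono hsub)
    have h2 : (κ (Set.Iic x)).toReal + (κ (Set.Ioi x)).toReal = 1 := by
      have := measure_add_measure_compl (μ := κ) (measurableSet_Iic (a := x))
      rw [Set.compl_Iic] at this
      have := congrArg ENNReal.toReal this
      rwa [ENNReal.toReal_add (measure_ne_top κ _) (measure_ne_top κ _),
        measure_univ, ENNReal.toReal_one] at this
    linarith
  · simp only [h, if_false]
    have := ENNReal.toReal_nonneg (a := κ {y : ℝ | ε ≤ |y - r|})
    have := ENNReal.toReal_nonneg (a := κ (Set.Iic x))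
    linarith

private lemma kernel_upper (κ : Measure ℝ) [IsProbabilityMeasure κ] {r x q ε : ℝ}
    (hε : 0 ≤ ε) (hqx : x + ε ≤ q) :
    (κ (Set.Iic x)).toReal
      ≤ (if r ≤ q then (1:ℝ) else 0) + (κ {y : ℝ | ε ≤ |y - r|}).toReal := by
  by_cases h : r ≤ q
  · simp only [h, if_true]
    have h1 : (κ (Set.Iic x)).toReal ≤ 1 := by
      have := ENNReal.toReal_mono (measure_ne_top κ Set.univ)
        (measure_mono (Set.subset_univ (Set.Iic x)))
      rwa [measure_univ, ENNReal.toReal_one] at this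
    have := ENNReal.toReal_nonneg (a := κ {y : ℝ | ε ≤ |y - r|})
    linarith
  · simp only [h, if_false, zero_add]
    push_neg at h
    have hsub : Set.Iic x ⊆ {y : ℝ | ε ≤ |y - r|} := by
      intro y hy
      simp only [Set.mem_Iic] at hy
      have : ε ≤ r - y := by linarith
      have habs : |y - r| = r - y := by
        rw [abs_sub_comm]; exact abs_of_nonneg (by linarith)
      show ε ≤ |y - r|
      rw [habs]; exact this
    exact ENNReal.toReal_mono (measure_ne_top κ _) (measure_mono hsub)

private lemma slln_ind {Ω : Type*} [MeasurableSpace Ω] (μ : Measure Ω) [IsProbabilityMeasure μ]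
    (o : ℕ → Ω → ℝ) (homeas : ∀ i, Measurable (o i))
    (hindep : iIndepFun o μ)
    (hident : ∀ i, IdentDistrib (o i) (o 0) μ μ) (q : ℝ) :
    ∀ᵐ ω ∂μ, Tendsto (fun n : ℕ => (1 / (n:ℝ)) * ∑ i ∈ Finset.range n,
        (if o (i+1) ω ≤ q then (1:ℝ) else 0)) atTop
      (𝓝 ((μ {ω | o 0 ω ≤ q}).toReal)) := by
  set f : ℝ → ℝ := (Set.Iic q).indicator (fun _ => 1) with hfdef
  have hf : Measurable f := measurable_const.indicator measurableSet_Iic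
  set X : ℕ → Ω → ℝ := fun i ω => f (o (i+1) ω) with hXdef
  have hX0 : X 0 = (o 1 ⁻¹' Set.Iic q).indicator (fun _ => 1) := by
    ext ω
    by_cases h : o 1 ω ≤ q <;>
      simp [hXdef, hfdef, Set.indicator_apply, Set.mem_preimage, Set.mem_Iic, h]
  have hint : Integrable (X 0) μ := by
    rw [hX0]
    exact (integrable_const 1).indicator ((homeas 1) measurableSet_Iic)
  have hindep' : Pairwise (Function.onFun (IndepFun · · μ) X) := by
    intro i j hij
    exact (hindep.indepFun (by omega : i+1 ≠ j+1)).comp hf hf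
  have hident' : ∀ i, IdentDistrib (X i) (X 0) μ μ := fun i =>
    ((hident (i+1)).trans (hident 1).symm).comp hf
  have hE : μ[X 0] = (μ {ω | o 0 ω ≤ q}).toReal := by
    rw [hX0, integral_indicator_const _ ((homeas 1) measurableSet_Iic)]
    have hmeq : μ (o 1 ⁻¹' Set.Iic q) = μ (o 0 ⁻¹' Set.Iic q) :=
      (hident 1).measure_mem_eq measurableSet_Iic
    have hseq : (o 0 ⁻¹' Set.Iic q) = {ω | o 0 ω ≤ q} := rfl
    rw [smul_eq_mul, mul_one, measureReal_def, hmeq, hseq]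
  have h := strong_law_ae_real X hint hindep' hident'
  rw [hE] at h
  filter_upwards [h] with ω hω
  have : (fun n : ℕ => (1 / (n:ℝ)) * ∑ i ∈ Finset.range n,
      (if o (i+1) ω ≤ q then (1:ℝ) else 0))
      = fun n : ℕ => (∑ i ∈ Finset.range n, X i ω) / n := by
    funext n
    rw [one_div, inv_mul_eq_div]
    congr 1
  rw [this]
  exact hω

/-- if the Cesàro averages of the kernel concentrations
C_i(ε) = K_{o_i}({y : |y − o_i| ≥ ε}) tend to 0 for every ε > 0, then almost surely
the averaged kernel CDFs H_n converge to F at every continuity point of F. -/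
theorem stmt_2 {Ω : Type*} [MeasurableSpace Ω] (μ : Measure Ω) [IsProbabilityMeasure μ]
    (o : ℕ → Ω → ℝ) (homeas : ∀ i, Measurable (o i))
    (hindep : iIndepFun o μ)
    (hident : ∀ i, IdentDistrib (o i) (o 0) μ μ)
    (F : ℝ → ℝ) (hF : ∀ x, F x = (μ {ω | o 0 ω ≤ x}).toReal)
    (K : ℕ → ℝ → Measure ℝ) (hKprob : ∀ i r, IsProbabilityMeasure (K i r))
    (hKcont : ∀ i r, Continuous (fun x => ((K i r) (Set.Iic x)).toReal))
    (hC : ∀ ε : ℝ, 0 < ε → ∀ ω : Ω,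
      Tendsto (fun n : ℕ =>
          (1 / (n : ℝ)) * ∑ i ∈ Finset.range n,
            ((K (i + 1) (o (i + 1) ω)) {y : ℝ | ε ≤ |y - o (i + 1) ω|}).toReal)
        atTop (𝓝 0)) :
    ∀ᵐ ω ∂μ, ∀ x : ℝ, ContinuousAt F x →
      Tendsto (fun n : ℕ =>
          (1 / (n : ℝ)) * ∑ i ∈ Finset.range n,
            ((K (i + 1) (o (i + 1) ω)) (Set.Iic x)).toReal)
        atTop (𝓝 (F x)) := by
  have hslln : ∀ᵐ ω ∂μ, ∀ q : ℚ,
      Tendsto (fun n : ℕ => (1 / (n:ℝ)) * ∑ i ∈ Finset.range n,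
        (if o (i+1) ω ≤ (q:ℝ) then (1:ℝ) else 0)) atTop (𝓝 (F (q:ℝ))) := by
    rw [ae_all_iff]
    intro q
    have := slln_ind μ o homeas hindep hident (q:ℝ)
    rw [← hF] at this
    exact this
  filter_upwards [hslln] with ω hω x hx
  rw [Metric.tendsto_atTop]
  intro δ hδ
  -- choose rationals close to x on each side
  obtain ⟨η, hη, hball⟩ := Metric.continuousAt_iff.1 hx (δ/2) (by linarith)
  obtain ⟨q1, hq1a, hq1b⟩ := exists_rat_btwn (show x - η < x by linarith)
  obtain ⟨q2, hq2a, hq2b⟩ := exists_rat_btwn (show x < x + η by linarith)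
  have hFq1 : |F q1 - F x| < δ/2 := by
    have : dist (q1:ℝ) x < η := by
      rw [Real.dist_eq, abs_of_nonpos (by linarith)]; linarith
    have := hball this
    rwa [Real.dist_eq] at this
  have hFq2 : |F q2 - F x| < δ/2 := by
    have : dist (q2:ℝ) x < η := by
      rw [Real.dist_eq, abs_of_nonneg (by linarith)]; linarith
    have := hball this
    rwa [Real.dist_eq] at this
  set ε1 : ℝ := x - q1 with hε1
  set ε2 : ℝ := q2 - x with hε2
  have hε1pos : 0 < ε1 := by simp [hε1]; linarith
  have hε2pos : 0 < ε2 := by simp [hε2]; linarith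
  have h1 := hω q1
  have h2 := hω q2
  have h3 := hC ε1 hε1pos ω
  have h4 := hC ε2 hε2pos ω
  have e1 := h1.eventually (eventually_gt_nhds (show F q1 - δ/4 < F q1 by linarith))
  have e2 := h2.eventually (eventually_lt_nhds (show F q2 < F q2 + δ/4 by linarith))
  have e3 := h4.eventually (eventually_lt_nhds (show (0:ℝ) < δ/4 by linarith))
  have e4 := h3.eventually (eventually_lt_nhds (show (0:ℝ) < δ/4 by linarith))
  have hab := abs_lt.1 hFq1
  have hab2 := abs_lt.1 hFq2
  obtain ⟨N1, hN1⟩ := eventually_atTop.1 e1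
  obtain ⟨N2, hN2⟩ := eventually_atTop.1 e2
  obtain ⟨N3, hN3⟩ := eventually_atTop.1 e3
  obtain ⟨N4, hN4⟩ := eventually_atTop.1 e4
  refine ⟨max (max N1 N2) (max N3 N4), fun n hn => ?_⟩
  have hn1 := hN1 n (le_trans (le_trans (le_max_left N1 N2) (le_max_left _ _)) hn)
  have hn2 := hN2 n (le_trans (le_trans (le_max_right N1 N2) (le_max_left _ _)) hn)
  have hn3 := hN3 n (le_trans (le_trans (le_max_left N3 N4) (le_max_right _ _)) hn)
  have hn4 := hN4 n (le_trans (le_trans (le_max_right N3 N4) (le_max_right _ _)) hn)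
  have hinv : (0:ℝ) ≤ 1 / (n:ℝ) := by positivity
  -- sandwich inequalities
  have keylo : (1 / (n:ℝ)) * ∑ i ∈ Finset.range n, (if o (i+1) ω ≤ (q1:ℝ) then (1:ℝ) else 0)
      - (1 / (n:ℝ)) * ∑ i ∈ Finset.range n,
          ((K (i + 1) (o (i + 1) ω)) {y : ℝ | ε1 ≤ |y - o (i + 1) ω|}).toReal
      ≤ (1 / (n:ℝ)) * ∑ i ∈ Finset.range n,
          ((K (i + 1) (o (i + 1) ω)) (Set.Iic x)).toReal := by
    rw [← mul_sub, ← Finset.sum_sub_distrib]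
    apply mul_le_mul_of_nonneg_left _ hinv
    apply Finset.sum_le_sum
    intro i _
    haveI := hKprob (i+1) (o (i+1) ω)
    exact kernel_lower (K (i+1) (o (i+1) ω)) (r := o (i+1) ω) (by simp [hε1])
  have keyhi : (1 / (n:ℝ)) * ∑ i ∈ Finset.range n,
          ((K (i + 1) (o (i + 1) ω)) (Set.Iic x)).toReal
      ≤ (1 / (n:ℝ)) * ∑ i ∈ Finset.range n, (if o (i+1) ω ≤ (q2:ℝ) then (1:ℝ) else 0)
      + (1 / (n:ℝ)) * ∑ i ∈ Finset.range n,
          ((K (i + 1) (o (i + 1) ω)) {y : ℝ | ε2 ≤ |y - o (i + 1) ω|}).toReal := by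
    rw [← mul_add, ← Finset.sum_add_distrib]
    apply mul_le_mul_of_nonneg_left _ hinv
    apply Finset.sum_le_sum
    intro i _
    haveI := hKprob (i+1) (o (i+1) ω)
    exact kernel_upper (K (i+1) (o (i+1) ω)) (r := o (i+1) ω) hε2pos.le (by simp [hε2])
  rw [Real.dist_eq, abs_lt]
  constructor
  · linarith
  · linarith
end

section
/- Let o_1, o_2, … be i.i.d. real random variables with CDF F. Suppose each kernel K_{o_i} is a probability measure with continuous CDF supported in the interval [o_i − δ_i, o_i + δ_i], where δ_i > 0 and δ_i → 0 as i → ∞. Then almost surely the averaged kernel CDFs H_n(x) = (1/n)·∑_{i=1}^n F_{K_{o_i}}(x) converge to F(x) at every continuity point of F. -/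
open MeasureTheory Filter Topology ProbabilityTheory

/-- if each kernel K_{o_i} has continuous CDF and is supported in
[o_i − δ_i, o_i + δ_i] with δ_i → 0, then almost surely the averaged kernel CDFs
converge to F at every continuity point of F. -/
theorem stmt_3 {Ω : Type*} [MeasurableSpace Ω] (μ : Measure Ω) [IsProbabilityMeasure μ]
    (o : ℕ → Ω → ℝ) (homeas : ∀ i, Measurable (o i))
    (hindep : iIndepFun o μ)
    (hident : ∀ i, IdentDistrib (o i) (o 0) μ μ)
    (F : ℝ → ℝ) (hF : ∀ x, F x = (μ {ω | o 0 ω ≤ x}).toReal)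
    (K : ℕ → ℝ → Measure ℝ) (hKprob : ∀ i r, IsProbabilityMeasure (K i r))
    (hKcont : ∀ i r, Continuous (fun x => ((K i r) (Set.Iic x)).toReal))
    (δ : ℕ → ℝ) (hδpos : ∀ i, 0 < δ i) (hδ : Tendsto δ atTop (𝓝 0))
    (hsupp : ∀ i r, (K i r) (Set.Icc (r - δ i) (r + δ i)) = 1) :
    ∀ᵐ ω ∂μ, ∀ x : ℝ, ContinuousAt F x →
      Tendsto (fun n : ℕ =>
          (1 / (n : ℝ)) * ∑ i ∈ Finset.range n,
            ((K (i + 1) (o (i + 1) ω)) (Set.Iic x)).toReal)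
        atTop (𝓝 (F x)) := by
  classical
  set φ : ℚ → ℝ → ℝ := fun q => (Set.Iic (q : ℝ)).indicator (fun _ => (1 : ℝ)) with hφdef
  have hφmeas : ∀ q : ℚ, Measurable (φ q) := fun q =>
    measurable_const.indicator measurableSet_Iic
  have hφ01 : ∀ q (y : ℝ), 0 ≤ φ q y ∧ φ q y ≤ 1 := by
    intro q y
    simp only [hφdef, Set.indicator]
    split_ifs <;> norm_num
  -- the strong law for each rational threshold
  have master : ∀ᵐ ω ∂μ, ∀ q : ℚ,
      Tendsto (fun n : ℕ => (∑ i ∈ Finset.range n, φ q (o (i + 1) ω)) / n)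
        atTop (𝓝 (F q)) := by
    rw [ae_all_iff]
    intro q
    have hXmeas : ∀ i : ℕ, Measurable (φ q ∘ o (i + 1)) := fun i =>
      (hφmeas q).comp (homeas (i + 1))
    have hint : Integrable (φ q ∘ o 1) μ := by
      refine (integrable_const (1 : ℝ)).mono'
        (hXmeas 0).aestronglyMeasurable (ae_of_all _ fun ω => ?_)
      have h := hφ01 q (o 1 ω)
      simp only [Function.comp_apply, Real.norm_eq_abs]
      rw [abs_of_nonneg h.1]
      exact h.2
    have hind : Pairwise (Function.onFun (IndepFun · · μ) fun i : ℕ => φ q ∘ o (i + 1)) := by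
      intro i j hij
      exact (hindep.indepFun (show i + 1 ≠ j + 1 by omega)).comp (hφmeas q) (hφmeas q)
    have hid : ∀ i : ℕ, IdentDistrib (φ q ∘ o (i + 1)) (φ q ∘ o 1) μ μ :=
      fun i => ((hident (i + 1)).trans (hident 1).symm).comp (hφmeas q)
    have hsl := strong_law_ae_real (fun i : ℕ => φ q ∘ o (i + 1)) hint hind hid
    have hmean : μ[φ q ∘ o 1] = F q := by
      have h1 : (fun ω => (φ q ∘ o 1) ω)
          = fun ω => (o 1 ⁻¹' Set.Iic (q : ℝ)).indicator (fun _ => (1 : ℝ)) ω := by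
        funext ω
        simp only [Function.comp_apply, hφdef, Set.indicator, Set.mem_preimage]
      rw [show μ[φ q ∘ o 1] = ∫ ω, (φ q ∘ o 1) ω ∂μ from rfl, h1,
        integral_indicator_const _ ((homeas 1) measurableSet_Iic)]
      have h2 : μ (o 1 ⁻¹' Set.Iic (q : ℝ)) = μ (o 0 ⁻¹' Set.Iic (q : ℝ)) := by
        rw [← Measure.map_apply (homeas 1) measurableSet_Iic,
          ← Measure.map_apply (homeas 0) measurableSet_Iic, (hident 1).map_eq]
      have h3 : o 0 ⁻¹' Set.Iic (q : ℝ) = {ω | o 0 ω ≤ (q : ℝ)} := rfl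
      rw [measureReal_def, h2, h3, hF]
      simp
    rw [hmean] at hsl
    exact hsl
  filter_upwards [master] with ω hω
  intro x hx
  rw [Metric.tendsto_nhds]
  intro ε hε
  obtain ⟨η, hη, hball⟩ := Metric.continuousAt_iff.mp hx (ε / 2) (by positivity)
  obtain ⟨q1, hq1a, hq1b⟩ := exists_rat_btwn (show x - η < x by linarith)
  obtain ⟨q2, hq2a, hq2b⟩ := exists_rat_btwn (show x < x + η by linarith)
  have hFq1 : |F q1 - F x| < ε / 2 := by
    have := hball (show dist (q1 : ℝ) x < η by
      rw [Real.dist_eq, abs_lt]; constructor <;> linarith)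
    rwa [Real.dist_eq] at this
  have hFq2 : |F q2 - F x| < ε / 2 := by
    have := hball (show dist (q2 : ℝ) x < η by
      rw [Real.dist_eq, abs_lt]; constructor <;> linarith)
    rwa [Real.dist_eq] at this
  set c : ℝ := min (x - q1) (q2 - x) with hcdef
  have hc : 0 < c := by
    apply lt_min <;> linarith
  obtain ⟨M, hM⟩ := eventually_atTop.mp (hδ.eventually_lt_const hc)
  set g : ℕ → ℝ := fun i => ((K (i + 1) (o (i + 1) ω)) (Set.Iic x)).toReal with hgdef
  have hg0 : ∀ i, 0 ≤ g i := fun i => ENNReal.toReal_nonneg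
  have hg1 : ∀ i, g i ≤ 1 := by
    intro i
    have := (hKprob (i + 1) (o (i + 1) ω))
    rw [show (1 : ℝ) = (1 : ENNReal).toReal by simp]
    exact ENNReal.toReal_mono ENNReal.one_ne_top prob_le_one
  -- pointwise comparison with indicators, for large indices
  have hlow : ∀ i, M ≤ i → φ q1 (o (i + 1) ω) ≤ g i := by
    intro i hi
    by_cases h : o (i + 1) ω ≤ (q1 : ℝ)
    · have hδi : δ (i + 1) < c := hM (i + 1) (by omega)
      have hsub : Set.Icc (o (i + 1) ω - δ (i + 1)) (o (i + 1) ω + δ (i + 1))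
          ⊆ Set.Iic x := by
        intro y hy
        have hc1 : c ≤ x - q1 := min_le_left _ _
        have := hy.2
        simp only [Set.mem_Iic]
        linarith
      have hK1 : (K (i + 1) (o (i + 1) ω)) (Set.Iic x) = 1 := by
        have hge := measure_mono hsub (μ := K (i + 1) (o (i + 1) ω))
        rw [hsupp (i + 1) (o (i + 1) ω)] at hge
        exact le_antisymm prob_le_one hge
      have : φ q1 (o (i + 1) ω) = 1 := by
        simp [hφdef, Set.indicator, h]
      rw [this, hgdef]
      simp [hK1]
    · have : φ q1 (o (i + 1) ω) = 0 := by
        simp [hφdef, Set.indicator, h]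
      rw [this]
      exact hg0 i
  have hup : ∀ i, M ≤ i → g i ≤ φ q2 (o (i + 1) ω) := by
    intro i hi
    by_cases h : o (i + 1) ω ≤ (q2 : ℝ)
    · have : φ q2 (o (i + 1) ω) = 1 := by
        simp [hφdef, Set.indicator, h]
      rw [this]
      exact hg1 i
    · have hδi : δ (i + 1) < c := hM (i + 1) (by omega)
      push_neg at h
      have hsub : Set.Iic x ⊆ (Set.Icc (o (i + 1) ω - δ (i + 1)) (o (i + 1) ω + δ (i + 1)))ᶜ := by
        intro y hy
        simp only [Set.mem_Iic] at hy
        have hc2 : c ≤ q2 - x := min_le_right _ _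
        simp only [Set.mem_compl_iff, Set.mem_Icc, not_and_or, not_le]
        left
        linarith
      have hK0 : (K (i + 1) (o (i + 1) ω)) (Set.Iic x) = 0 := by
        have hle := measure_mono hsub (μ := K (i + 1) (o (i + 1) ω))
        have hcompl : (K (i + 1) (o (i + 1) ω))
            ((Set.Icc (o (i + 1) ω - δ (i + 1)) (o (i + 1) ω + δ (i + 1)))ᶜ) = 0 := by
          have := hKprob (i + 1) (o (i + 1) ω)
          rw [measure_compl measurableSet_Icc (measure_ne_top _ _),
            hsupp (i + 1) (o (i + 1) ω), measure_univ, tsub_self]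
        rw [hcompl] at hle
        exact le_antisymm hle zero_le
      have : φ q2 (o (i + 1) ω) = 0 := by
        simp [hφdef, Set.indicator, not_le.mpr h]
      rw [this, hgdef]
      simp [hK0]
  -- sum comparisons
  have hsum_up : ∀ n : ℕ, ∑ i ∈ Finset.range n, g i
      ≤ (∑ i ∈ Finset.range n, φ q2 (o (i + 1) ω)) + M := by
    intro n
    have h1 : ∑ i ∈ Finset.range n, g i
        ≤ ∑ i ∈ Finset.range n, (φ q2 (o (i + 1) ω) + if i < M then 1 else 0) := by
      apply Finset.sum_le_sum
      intro i _
      by_cases hi : M ≤ i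
      · have := hup i hi
        simp only [if_neg (not_lt.mpr hi), add_zero]
        exact this
      · have := hg1 i
        have h0 := (hφ01 q2 (o (i + 1) ω)).1
        simp only [if_pos (not_le.mp hi)]
        linarith
    rw [Finset.sum_add_distrib] at h1
    have h2 : (∑ i ∈ Finset.range n, if i < M then (1 : ℝ) else 0) ≤ M := by
      rw [Finset.sum_boole]
      have : ((Finset.range n).filter (· < M)).card ≤ M := by
        have hsub : (Finset.range n).filter (· < M) ⊆ Finset.range M := by
          intro i himem
          simp only [Finset.mem_filter] at himem
          exact Finset.mem_range.mpr himem.2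
        simpa using Finset.card_le_card hsub
      exact_mod_cast this
    linarith
  have hsum_low : ∀ n : ℕ, (∑ i ∈ Finset.range n, φ q1 (o (i + 1) ω)) - M
      ≤ ∑ i ∈ Finset.range n, g i := by
    intro n
    have h1 : ∑ i ∈ Finset.range n, φ q1 (o (i + 1) ω)
        ≤ ∑ i ∈ Finset.range n, (g i + if i < M then 1 else 0) := by
      apply Finset.sum_le_sum
      intro i _
      by_cases hi : M ≤ i
      · have := hlow i hi
        simp only [if_neg (not_lt.mpr hi), add_zero]
        exact this
      · have := (hφ01 q1 (o (i + 1) ω)).2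
        have h0 := hg0 i
        simp only [if_pos (not_le.mp hi)]
        linarith
    rw [Finset.sum_add_distrib] at h1
    have h2 : (∑ i ∈ Finset.range n, if i < M then (1 : ℝ) else 0) ≤ M := by
      rw [Finset.sum_boole]
      have : ((Finset.range n).filter (· < M)).card ≤ M := by
        have hsub : (Finset.range n).filter (· < M) ⊆ Finset.range M := by
          intro i himem
          simp only [Finset.mem_filter] at himem
          exact Finset.mem_range.mpr himem.2
        simpa using Finset.card_le_card hsub
      exact_mod_cast this
    linarith
  -- limits of the bounding sequences
  have hMdiv : Tendsto (fun n : ℕ => (M : ℝ) / n) atTop (𝓝 0) :=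
    tendsto_const_div_atTop_nhds_zero_nat (M : ℝ)
  have hB : Tendsto (fun n : ℕ => (∑ i ∈ Finset.range n, φ q2 (o (i + 1) ω)) / n + M / n)
      atTop (𝓝 (F q2)) := by
    have := (hω q2).add hMdiv
    simpa using this
  have hA : Tendsto (fun n : ℕ => (∑ i ∈ Finset.range n, φ q1 (o (i + 1) ω)) / n - M / n)
      atTop (𝓝 (F q1)) := by
    have := (hω q1).sub hMdiv
    simpa using this
  have habs1 := abs_lt.mp hFq1
  have habs2 := abs_lt.mp hFq2
  have hBev : ∀ᶠ n : ℕ in atTop,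
      (∑ i ∈ Finset.range n, φ q2 (o (i + 1) ω)) / n + M / n < F x + ε :=
    hB.eventually_lt_const (by linarith)
  have hAev : ∀ᶠ n : ℕ in atTop,
      F x - ε < (∑ i ∈ Finset.range n, φ q1 (o (i + 1) ω)) / n - M / n :=
    hA.eventually_const_lt (by linarith)
  filter_upwards [hBev, hAev, eventually_ge_atTop 1] with n hBN hAN hn1
  have hnpos : (0 : ℝ) < n := by exact_mod_cast hn1
  rw [Real.dist_eq, abs_lt]
  have hrw : (1 / (n : ℝ)) * ∑ i ∈ Finset.range n,
      ((K (i + 1) (o (i + 1) ω)) (Set.Iic x)).toReal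
      = (∑ i ∈ Finset.range n, g i) / n := by
    rw [one_div_mul_eq_div]
  rw [hrw]
  constructor
  · have h1 : ((∑ i ∈ Finset.range n, φ q1 (o (i + 1) ω)) - M) / n
        ≤ (∑ i ∈ Finset.range n, g i) / n := by
      gcongr
      exact hsum_low n
    rw [sub_div] at h1
    linarith
  · have h1 : (∑ i ∈ Finset.range n, g i) / n
        ≤ ((∑ i ∈ Finset.range n, φ q2 (o (i + 1) ω)) + M) / n := by
      gcongr
      exact hsum_up n
    rw [add_div] at h1
    linarith
end

section
/- For every probability measure R on the Borel sets of ℝ^d, there exists a partition family T parametrized by θ ∈ [0,1)^d with countably many measurable bins, and the uniform measure Ψ on [0,1)^d, such that (T, Ψ) is point-isolating over R (any two distinct points of the support of R are separated by a positive-Ψ-measure set of partitions) and bin-supported over R (for every ω ∈ ℝ^d, the set of θ for which the bin of T(θ) containing ω has R-measure zero is a Ψ-null set). -/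
open MeasureTheory

/-- The topological support of a measure: points all of whose open neighborhoods
have positive measure. -/
def measSupport {d : ℕ} (R : Measure (Fin d → ℝ)) : Set (Fin d → ℝ) :=
  {x | ∀ U : Set (Fin d → ℝ), IsOpen U → x ∈ U → 0 < R U}

namespace Stmt12Aux

variable {d : ℕ}

/-- Open lower half-space at rational threshold `q` in coordinate `i`. -/
def halfLt (i : Fin d) (q : ℚ) : Set (Fin d → ℝ) := {x | x i < (q : ℝ)}

lemma halfLt_open (i : Fin d) (q : ℚ) : IsOpen (halfLt i q) :=
  isOpen_Iio.preimage (continuous_apply i)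

lemma halfLt_meas (i : Fin d) (q : ℚ) : MeasurableSet (halfLt i q) :=
  (halfLt_open i q).measurableSet

/-- The two-bin partition determined by a half-space, merged to the trivial
partition when one of the two sides is `R`-null. -/
noncomputable def P (R : Measure (Fin d → ℝ)) (iq : Fin d × ℚ) (n : Fin d → ℤ) :
    Set (Fin d → ℝ) :=
  if R (halfLt iq.1 iq.2) = 0 ∨ R (halfLt iq.1 iq.2)ᶜ = 0 then
    (if n = (fun _ => (0 : ℤ)) then Set.univ else ∅)
  else
    if n = (fun _ => (0 : ℤ)) then halfLt iq.1 iq.2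
    else if n = (fun _ => (1 : ℤ)) then (halfLt iq.1 iq.2)ᶜ else ∅

lemma P_meas (R : Measure (Fin d → ℝ)) (iq : Fin d × ℚ) (n : Fin d → ℤ) :
    MeasurableSet (P R iq n) := by
  unfold P
  split_ifs <;>
    first
      | exact MeasurableSet.univ
      | exact MeasurableSet.empty
      | exact halfLt_meas _ _
      | exact (halfLt_meas _ _).compl

lemma P_disjoint (R : Measure (Fin d → ℝ)) (iq : Fin d × ℚ) {n m : Fin d → ℤ}
    (hnm : n ≠ m) : Disjoint (P R iq n) (P R iq m) := by
  unfold P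
  split_ifs <;>
    first
      | exact disjoint_bot_right
      | exact disjoint_bot_left
      | exact disjoint_compl_right
      | exact disjoint_compl_left
      | (exfalso; subst_vars; exact hnm rfl)

lemma P_iUnion (R : Measure (Fin d → ℝ)) (iq : Fin d × ℚ)
    (h01 : (fun _ : Fin d => (0 : ℤ)) ≠ (fun _ => (1 : ℤ))) :
    (⋃ n, P R iq n) = Set.univ := by
  ext x
  simp only [Set.mem_iUnion, Set.mem_univ, iff_true]
  unfold P
  by_cases htriv : R (halfLt iq.1 iq.2) = 0 ∨ R (halfLt iq.1 iq.2)ᶜ = 0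
  · exact ⟨fun _ => 0, by simp [htriv]⟩
  · by_cases hx : x ∈ halfLt iq.1 iq.2
    · exact ⟨fun _ => 0, by simp [htriv, hx]⟩
    · exact ⟨fun _ => 1, by simp [htriv, h01.symm, hx]⟩

lemma P_pos (R : Measure (Fin d → ℝ)) [IsProbabilityMeasure R] (iq : Fin d × ℚ)
    {n : Fin d → ℤ} {ω : Fin d → ℝ} (hω : ω ∈ P R iq n) : R (P R iq n) ≠ 0 := by
  unfold P at hω ⊢
  split_ifs at hω ⊢ with h1 h2 h2 h3
  · simp
  · exact absurd hω (Set.notMem_empty ω)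
  · exact fun h => (not_or.mp h1).1 h
  · exact fun h => (not_or.mp h1).2 h
  · exact absurd hω (Set.notMem_empty ω)

/-- Separation: if the half-space and its complement both have positive measure
and `ω₁`, `ω₂` lie on opposite sides, then no bin contains both. -/
lemma P_sep (R : Measure (Fin d → ℝ)) (iq : Fin d × ℚ)
    (hA : R (halfLt iq.1 iq.2) ≠ 0) (hAc : R (halfLt iq.1 iq.2)ᶜ ≠ 0)
    {ω₁ ω₂ : Fin d → ℝ} (hsep : ω₁ ∈ halfLt iq.1 iq.2 ↔ ω₂ ∉ halfLt iq.1 iq.2)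
    (n : Fin d → ℤ) (h1 : ω₁ ∈ P R iq n) : ω₂ ∉ P R iq n := by
  unfold P at h1 ⊢
  rw [if_neg (not_or.mpr ⟨hA, hAc⟩)] at h1 ⊢
  split_ifs at h1 ⊢ with h h'
  · exact hsep.mp h1
  · intro h2
    exact h1 (hsep.mpr h2)
  · exact absurd h1 (Set.notMem_empty ω₁)

/-- Dyadic intervals exhausting `[0,1)`. -/
def I (k : ℕ) : Set ℝ := Set.Ico (1 - (2 : ℝ)⁻¹ ^ k) (1 - (2 : ℝ)⁻¹ ^ (k + 1))

lemma I_subset (k : ℕ) : I k ⊆ Set.Ico (0 : ℝ) 1 := by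
  intro x hx
  obtain ⟨h1, h2⟩ := hx
  constructor
  · have : (2 : ℝ)⁻¹ ^ k ≤ 1 := pow_le_one₀ (by norm_num) (by norm_num)
    linarith
  · have : (0 : ℝ) < (2 : ℝ)⁻¹ ^ (k + 1) := by positivity
    linarith

lemma I_unique {x : ℝ} {k j : ℕ} (hk : x ∈ I k) (hj : x ∈ I j) : k = j := by
  obtain ⟨hk1, hk2⟩ := hk
  obtain ⟨hj1, hj2⟩ := hj
  have h2 : (0 : ℝ) < 2⁻¹ := by norm_num
  have h2' : (2 : ℝ)⁻¹ < 1 := by norm_num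
  by_contra hne
  rcases Nat.lt_or_ge k j with h | h
  · have : (2 : ℝ)⁻¹ ^ j ≤ (2 : ℝ)⁻¹ ^ (k + 1) :=
      pow_le_pow_of_le_one (le_of_lt h2) (le_of_lt h2') h
    linarith
  · have h' : j < k := lt_of_le_of_ne h (fun hh => hne hh.symm)
    have : (2 : ℝ)⁻¹ ^ k ≤ (2 : ℝ)⁻¹ ^ (j + 1) :=
      pow_le_pow_of_le_one (le_of_lt h2) (le_of_lt h2') h'
    linarith

lemma I_volume (k : ℕ) : volume (I k) = ENNReal.ofReal ((2 : ℝ)⁻¹ ^ (k + 1)) := by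
  rw [I, Real.volume_Ico]
  congr 1
  rw [pow_succ]
  ring

end Stmt12Aux

open Stmt12Aux in
/-- for every Borel probability measure R on ℝ^d there is a partition
family T, parametrized by θ ∈ [0,1)^d with countably many measurable bins (indexed by
ℤ^d), such that with Ψ the uniform measure on [0,1)^d, (T, Ψ) is point-isolating and
bin-supported over R. -/
theorem stmt_12 {d : ℕ} (R : Measure (Fin d → ℝ)) [IsProbabilityMeasure R] :
    ∃ T : (Fin d → ℝ) → (Fin d → ℤ) → Set (Fin d → ℝ),
      -- T(θ) is a partition into measurable bins for each parameter θ ∈ [0,1)^d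
      (∀ θ ∈ Set.univ.pi fun _ : Fin d => Set.Ico (0 : ℝ) 1,
        (∀ n, MeasurableSet (T θ n)) ∧
        (∀ n m, n ≠ m → Disjoint (T θ n) (T θ m)) ∧
        (⋃ n, T θ n) = Set.univ) ∧
      -- point-isolating over R
      (∀ ω₁ ∈ measSupport R, ∀ ω₂ ∈ measSupport R, ω₁ ≠ ω₂ →
        0 < (volume.restrict (Set.univ.pi fun _ : Fin d => Set.Ico (0 : ℝ) 1))
              {θ | ∀ n, ω₁ ∈ T θ n → ω₂ ∉ T θ n}) ∧
      -- bin-supported over R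
      (∀ ω : Fin d → ℝ,
        (volume.restrict (Set.univ.pi fun _ : Fin d => Set.Ico (0 : ℝ) 1))
            {θ | ∃ n, ω ∈ T θ n ∧ R (T θ n) = 0} = 0) := by
  classical
  rcases Nat.eq_zero_or_pos d with hd | hd
  · -- degenerate case d = 0 : everything is trivial
    subst hd
    refine ⟨fun _ _ => Set.univ, ?_, ?_, ?_⟩
    · intro θ _
      haveI : Nonempty (Fin 0 → ℤ) := ⟨fun i => i.elim0⟩
      exact ⟨fun _ => MeasurableSet.univ,
        fun n m hnm => absurd (funext fun i => i.elim0) hnm, Set.iUnion_const _⟩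
    · intro ω₁ _ ω₂ _ h
      exact absurd (funext fun i => i.elim0) h
    · intro ω
      have hemp : {θ : Fin 0 → ℝ | ∃ _ : Fin 0 → ℤ,
          ω ∈ (Set.univ : Set (Fin 0 → ℝ)) ∧ R Set.univ = 0} = ∅ := by
        ext θ
        simp [measure_univ]
      rw [hemp]
      simp
  · -- main case d ≥ 1
    set i0 : Fin d := ⟨0, hd⟩ with hi0
    haveI : Nonempty (Fin d) := ⟨i0⟩
    obtain ⟨e, he⟩ := exists_surjective_nat (Fin d × ℚ)
    have h01 : (fun _ : Fin d => (0 : ℤ)) ≠ (fun _ => (1 : ℤ)) := by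
      intro h
      simpa using congrFun h i0
    set box : Set (Fin d → ℝ) := Set.univ.pi fun _ : Fin d => Set.Ico (0 : ℝ) 1 with hbox
    refine ⟨fun θ => if h : ∃ k, θ i0 ∈ I k then P R (e h.choose) else P R (e 0),
      ?_, ?_, ?_⟩
    · -- partition properties
      intro θ _
      refine ⟨?_, ?_, ?_⟩
      · intro n
        dsimp only
        split_ifs <;> exact P_meas R _ n
      · intro n m hnm
        dsimp only
        split_ifs <;> exact P_disjoint R _ hnm
      · dsimp only
        split_ifs <;> exact P_iUnion R _ h01
    · -- point-isolating
      intro ω₁ hω₁ ω₂ hω₂ hne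
      -- find a coordinate where they differ and a rational strictly between
      obtain ⟨i, hi⟩ := Function.ne_iff.mp hne
      -- set up (a, b) = the two values in order, with the corresponding points
      obtain ⟨ωa, ωb, hab⟩ : ∃ ωa ωb : Fin d → ℝ, ωa i < ωb i ∧
          ({ωa, ωb} : Set (Fin d → ℝ)) = {ω₁, ω₂} := by
        rcases lt_or_gt_of_ne hi with h | h
        · exact ⟨ω₁, ω₂, h, rfl⟩
        · exact ⟨ω₂, ω₁, h, Set.pair_comm _ _⟩
      obtain ⟨hab, hpair⟩ := hab
      have hωa : ωa ∈ measSupport R := by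
        have : ωa ∈ ({ω₁, ω₂} : Set (Fin d → ℝ)) := by rw [← hpair]; simp
        rcases this with h | h <;> simp_all
      have hωb : ωb ∈ measSupport R := by
        have : ωb ∈ ({ω₁, ω₂} : Set (Fin d → ℝ)) := by rw [← hpair]; simp
        rcases this with h | h <;> simp_all
      obtain ⟨q, hq1, hq2⟩ := exists_rat_btwn hab
      obtain ⟨k, hk⟩ := he (i, q)
      -- both sides of the half-space have positive R-measure
      have hA : R (halfLt i q) ≠ 0 :=
        (hωa (halfLt i q) (halfLt_open i q) hq1).ne'
      have hAc : R (halfLt i q)ᶜ ≠ 0 := by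
        have hopen : IsOpen {x : Fin d → ℝ | (q : ℝ) < x i} :=
          isOpen_Ioi.preimage (continuous_apply i)
        have hsub : {x : Fin d → ℝ | (q : ℝ) < x i} ⊆ (halfLt i q)ᶜ := by
          intro x hx
          simp only [halfLt, Set.mem_compl_iff, Set.mem_setOf_eq, not_lt]
          exact le_of_lt hx
        exact fun h => absurd (measure_mono_null hsub h)
          (hωb _ hopen hq2).ne'
      -- membership on opposite sides
      have hsep : ω₁ ∈ halfLt i q ↔ ω₂ ∉ halfLt i q := by
        have ha : ωa ∈ halfLt i q := hq1
        have hb : ωb ∉ halfLt i q := not_lt.mpr (le_of_lt hq2)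
        have : (ω₁ = ωa ∧ ω₂ = ωb) ∨ (ω₁ = ωb ∧ ω₂ = ωa) := by
          have h1 : ω₁ ∈ ({ωa, ωb} : Set (Fin d → ℝ)) := by rw [hpair]; simp
          have h2 : ω₂ ∈ ({ωa, ωb} : Set (Fin d → ℝ)) := by rw [hpair]; simp
          have hne' : ωa ≠ ωb := fun h => absurd (congrFun h i) (ne_of_lt hab)
          rcases h1 with h1 | h1 <;> rcases h2 with h2 | h2
          · exact absurd (h1.trans h2.symm) hne
          · exact Or.inl ⟨h1, h2⟩
          · exact Or.inr ⟨h1, h2⟩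
          · exact absurd (h1.trans h2.symm) hne
        rcases this with ⟨e1, e2⟩ | ⟨e1, e2⟩ <;> subst e1 <;> subst e2 <;> simp [ha, hb]
      -- θ's whose first coordinate is in I k select the partition P (e k)
      have hTk : ∀ θ : Fin d → ℝ, θ i0 ∈ I k →
          (if h : ∃ k', θ i0 ∈ I k' then P R (e h.choose) else P R (e 0)) = P R (i, q) := by
        intro θ hθ
        rw [dif_pos ⟨k, hθ⟩]
        have := (⟨k, hθ⟩ : ∃ k', θ i0 ∈ I k').choose_spec
        rw [I_unique this hθ, hk]
      -- the selector set is contained in the separating set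
      have hsubset : (fun θ : Fin d → ℝ => θ i0) ⁻¹' I k ⊆
          {θ | ∀ n, ω₁ ∈ (if h : ∃ k', θ i0 ∈ I k' then P R (e h.choose) else P R (e 0)) n →
            ω₂ ∉ (if h : ∃ k', θ i0 ∈ I k' then P R (e h.choose) else P R (e 0)) n} := by
        intro θ hθ
        simp only [Set.mem_setOf_eq, hTk θ hθ]
        exact fun n => P_sep R (i, q) hA hAc hsep n
      refine lt_of_lt_of_le ?_ (measure_mono hsubset)
      -- positivity of the measure of the selector set
      have hmeas : MeasurableSet ((fun θ : Fin d → ℝ => θ i0) ⁻¹' I k) :=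
        (measurable_pi_apply i0) measurableSet_Ico
      rw [Measure.restrict_apply hmeas]
      have hpi : (fun θ : Fin d → ℝ => θ i0) ⁻¹' I k ∩ box =
          Set.univ.pi fun j => if j = i0 then I k else Set.Ico (0 : ℝ) 1 := by
        ext θ
        simp only [Set.mem_inter_iff, Set.mem_preimage, hbox, Set.mem_pi, Set.mem_univ,
          forall_true_left]
        constructor
        · rintro ⟨h1, h2⟩ j
          by_cases hj : j = i0
          · subst hj; simp [h1]
          · simpa [hj] using h2 j
        · intro h
          refine ⟨by simpa using h i0, fun j => ?_⟩
          by_cases hj : j = i0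
          · subst hj
            exact I_subset k (by simpa using h i0)
          · simpa [hj] using h j
      rw [hpi, volume_pi_pi]
      refine CanonicallyOrderedAdd.prod_pos.2 fun j _ => ?_
      by_cases hj : j = i0
      · subst hj
        rw [if_pos rfl, I_volume]
        exact ENNReal.ofReal_pos.mpr (by positivity)
      · rw [if_neg hj, Real.volume_Ico]
        norm_num
    · -- bin-supported: every bin containing any point has positive R-measure
      intro ω
      refine measure_mono_null (fun θ hθ => ?_) (measure_empty (μ := volume.restrict box))
      obtain ⟨n, hmem, hzero⟩ := hθ
      dsimp only at hmem hzero
      split_ifs at hmem hzero <;> exact P_pos R _ hmem hzero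
end
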